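/- Let h(x) := −4e^x(e^{2x}+3) / ((e^x−1)(e^x+3)((2e^x+e^{2x}−3)log((e^x−1)/(e^x+3)) − 4e^x x)) for x > 0. Then there exist constants c, c' > 0 and δ ∈ (0,1) such that c ≤ −h(x)·x²·log x ≤ c' for all 0 < x < δ. Consequently ∫₀^δ √(h(x)) dx = ∞. -/

import Mathlib

open Real MeasureTheory

noncomputable def h8 (x : ℝ) : ℝ :=
  -4 * exp x * (exp (2 * x) + 3) /
    ((exp x - 1) * (exp x + 3) *
      ((2 * exp x + exp (2 * x) - 3) * Real.log ((exp x - 1) / (exp x + 3)) - 4 * exp x * x))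

lemma h8_eq (x : ℝ) :
    h8 x = (4 * exp x * (exp (2*x) + 3)) /
      (((exp x - 1) * (exp x + 3)) *
        (4 * exp x * x - ((exp x - 1) * (exp x + 3)) * Real.log ((exp x - 1)/(exp x + 3)))) := by
  have he2 : exp (2*x) = exp x * exp x := by rw [two_mul, Real.exp_add]
  unfold h8
  rw [he2]
  rw [show ((Real.exp x - 1) * (Real.exp x + 3) *
        ((2 * Real.exp x + Real.exp x * Real.exp x - 3) *
          Real.log ((Real.exp x - 1) / (Real.exp x + 3)) - 4 * Real.exp x * x)) =
      -(((Real.exp x - 1) * (Real.exp x + 3)) *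
        (4 * Real.exp x * x - ((Real.exp x - 1) * (Real.exp x + 3)) *
          Real.log ((Real.exp x - 1)/(Real.exp x + 3)))) from by ring]
  rw [div_neg, show -4 * Real.exp x * (Real.exp x * Real.exp x + 3)
      = -(4 * Real.exp x * (Real.exp x * Real.exp x + 3)) from by ring, neg_div, neg_neg]

set_option maxHeartbeats 1000000 in
lemma h8_bounds {x : ℝ} (hx0 : 0 < x) (hx : x < 1/100) :
    (4:ℝ)/55 ≤ -h8 x * x ^ 2 * Real.log x ∧ -h8 x * x ^ 2 * Real.log x ≤ 7/2 := by
  have hex := Real.add_one_le_exp x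
  have hexn := Real.add_one_le_exp (-x)
  have hprod : Real.exp (-x) * Real.exp x = 1 := by rw [← Real.exp_add]; simp
  have hepos := Real.exp_pos x
  have henpos := Real.exp_pos (-x)
  have he2 : Real.exp x ≤ 2 := by nlinarith
  have he1 : 1 < Real.exp x := by nlinarith
  have hub : Real.exp x - 1 ≤ 2 * x := by nlinarith
  have hlb : x ≤ Real.exp x - 1 := by nlinarith
  have he2sq : Real.exp (2*x) = Real.exp x * Real.exp x := by rw [two_mul, Real.exp_add]
  -- log x ≤ -4
  have hexp4 : Real.exp 4 < 100 := by
    have h9 : Real.exp 1 < 2.7182818286 := Real.exp_one_lt_d9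
    have h4 : Real.exp 4 = Real.exp 1 ^ 4 := by
      rw [show (4:ℝ) = ((4:ℕ):ℝ) * 1 by norm_num, Real.exp_nat_mul]
    have h5 : Real.exp 1 ^ 4 < 2.7182818286 ^ 4 :=
      pow_lt_pow_left₀ h9 (Real.exp_pos 1).le (by norm_num)
    rw [h4]
    norm_num at h5 ⊢
    linarith
  have hlog4 : Real.log x ≤ -4 := by
    rw [Real.log_le_iff_le_exp hx0]
    have : (1:ℝ)/100 ≤ Real.exp (-4) := by
      rw [Real.exp_neg, show (1:ℝ)/100 = (100:ℝ)⁻¹ by norm_num]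
      exact inv_anti₀ (Real.exp_pos 4) hexp4.le
    linarith
  have hml : (4:ℝ) ≤ -Real.log x := by linarith
  have hmpos : (0:ℝ) < -Real.log x := by linarith
  have hxlg : 0 < x * (-Real.log x) := mul_pos hx0 hmpos
  -- log pieces
  have hem1pos : (0:ℝ) < Real.exp x - 1 := by linarith
  have hep3pos : (0:ℝ) < Real.exp x + 3 := by linarith
  have hlogm : Real.log x ≤ Real.log (Real.exp x - 1) := Real.log_le_log hx0 hlb
  have hlog_ub : Real.log (Real.exp x - 1) ≤ Real.log 2 + Real.log x := by
    have h1 : Real.log (Real.exp x - 1) ≤ Real.log (2*x) := Real.log_le_log hem1pos hub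
    rwa [Real.log_mul (by norm_num) hx0.ne'] at h1
  have hlog_p3_lb : Real.log 4 ≤ Real.log (Real.exp x + 3) := Real.log_le_log (by norm_num) (by linarith)
  have hlog_p3_ub : Real.log (Real.exp x + 3) ≤ Real.log 5 := Real.log_le_log hep3pos (by linarith)
  have hlog2 : (0:ℝ) ≤ Real.log 2 := Real.log_nonneg (by norm_num)
  have hlog4' : Real.log 4 = 2 * Real.log 2 := by
    rw [show (4:ℝ) = 2^(2:ℕ) by norm_num, Real.log_pow]; norm_num
  have hlog5 : Real.log 5 ≤ 2 := by
    rw [Real.log_le_iff_le_exp (by norm_num)]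
    have h9 : (2.7182818283:ℝ) < Real.exp 1 := Real.exp_one_gt_d9
    have h4 : Real.exp 2 = Real.exp 1 ^ 2 := by
      rw [show (2:ℝ) = ((2:ℕ):ℝ) * 1 by norm_num, Real.exp_nat_mul]
    nlinarith
  set L := Real.log ((Real.exp x - 1)/(Real.exp x + 3)) with hLdef
  have hL : L = Real.log (Real.exp x - 1) - Real.log (Real.exp x + 3) :=
    Real.log_div hem1pos.ne' hep3pos.ne'
  have hnegL_lb : -Real.log x ≤ -L := by rw [hL]; linarith
  have hnegL_ub : -L ≤ 2 * (-Real.log x) := by rw [hL]; linarith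
  set P := (Real.exp x - 1) * (Real.exp x + 3) with hPdef
  have hP_lb : 4*x ≤ P := by rw [hPdef]; nlinarith
  have hP_ub : P ≤ 10*x := by rw [hPdef]; nlinarith
  have hPpos : 0 < P := by linarith
  set B := 4 * Real.exp x * x - P * L with hBdef
  have hB_lb : 4*(x*(-Real.log x)) ≤ B := by
    have h1 : (4*x)*(-Real.log x) ≤ P*(-L) :=
      mul_le_mul hP_lb hnegL_lb hmpos.le hPpos.le
    have h2 : 0 ≤ 4 * Real.exp x * x := by positivity
    rw [hBdef]; nlinarith
  have hB_ub : B ≤ 22*(x*(-Real.log x)) := by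
    have h1 : P*(-L) ≤ (10*x)*(2*(-Real.log x)) :=
      mul_le_mul hP_ub hnegL_ub (by linarith) (by linarith)
    have h2 : Real.exp x * x ≤ 2*x := mul_le_mul_of_nonneg_right he2 hx0.le
    have h3 : x*4 ≤ x*(-Real.log x) := mul_le_mul_of_nonneg_left hml hx0.le
    rw [hBdef]; nlinarith
  set m := x^2 * (-Real.log x) with hmdef
  have hm : 0 < m := by rw [hmdef]; exact mul_pos (by positivity) hmpos
  have hBpos : 0 < B := by nlinarith
  have hDd_lb : 16*m ≤ P*B := by
    have h1 : (4*x)*(4*(x*(-Real.log x))) ≤ P*B :=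
      mul_le_mul hP_lb hB_lb (by nlinarith) hPpos.le
    rw [hmdef]; nlinarith
  have hDd_ub : P*B ≤ 220*m := by
    have h1 : P*B ≤ (10*x)*(22*(x*(-Real.log x))) :=
      mul_le_mul hP_ub hB_ub hBpos.le (by linarith)
    rw [hmdef]; nlinarith
  set A := 4 * Real.exp x * (Real.exp (2*x) + 3) with hAdef
  have hA_lb : 16 ≤ A := by rw [hAdef, he2sq]; nlinarith
  have hA_ub : A ≤ 56 := by
    rw [hAdef, he2sq]
    have : Real.exp x * Real.exp x ≤ 4 := by nlinarith
    nlinarith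
  have hDpos : 0 < P*B := mul_pos hPpos hBpos
  have hkey : -h8 x * x ^ 2 * Real.log x = (A * m) / (P * B) := by
    rw [h8_eq x, ← hLdef, ← hPdef, ← hBdef, ← hAdef, hmdef]
    ring
  rw [hkey]
  constructor
  · have h1 : (16*m)/(220*m) ≤ A*m/(P*B) :=
      div_le_div₀ (mul_nonneg (by linarith) hm.le)
        (mul_le_mul_of_nonneg_right hA_lb hm.le) hDpos hDd_ub
    have h2 : (16*m)/(220*m) = 16/220 := mul_div_mul_right 16 220 hm.ne'
    rw [h2] at h1
    linarith [h1, show (16:ℝ)/220 = 4/55 by norm_num]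
  · have h1 : A*m/(P*B) ≤ (56*m)/(16*m) :=
      div_le_div₀ (by linarith) (mul_le_mul_of_nonneg_right hA_ub hm.le)
        (by linarith) hDd_lb
    have h2 : (56*m)/(16*m) = 56/16 := mul_div_mul_right 56 16 hm.ne'
    rw [h2] at h1
    linarith [h1, show (56:ℝ)/16 = 7/2 by norm_num]

set_option maxHeartbeats 1000000 in
lemma g_lintegral_top :
    ∫⁻ x in Set.Ioo (0:ℝ) (1/100), ENNReal.ofReal (1/(4*x*Real.sqrt (-Real.log x))) = ⊤ := by
  set g : ℝ → ℝ := fun x => 1/(4*x*Real.sqrt (-Real.log x)) with hg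
  by_contra hne
  have hgm : Measurable g := by
    apply Measurable.div measurable_const
    exact ((measurable_const.mul measurable_id).mul
      (Real.continuous_sqrt.measurable.comp Real.measurable_log.neg))
  have hgnn : ∀ x ∈ Set.Ioo (0:ℝ) (1/100), 0 ≤ g x := by
    intro x hx
    have hx0 := hx.1
    have : (0:ℝ) ≤ 4*x*Real.sqrt (-Real.log x) := by positivity
    rw [hg]
    positivity
  have hgnn' : 0 ≤ᶠ[ae (volume.restrict (Set.Ioo (0:ℝ) (1/100)))] g :=
    (ae_restrict_iff' measurableSet_Ioo).2 (ae_of_all _ hgnn)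
  have hint : IntegrableOn g (Set.Ioo (0:ℝ) (1/100)) := by
    refine ⟨hgm.aestronglyMeasurable, ?_⟩
    rw [hasFiniteIntegral_iff_ofReal hgnn']
    exact lt_top_iff_ne_top.2 hne
  set M := ∫ x in Set.Ioo (0:ℝ) (1/100), g x with hM
  have hMnn : 0 ≤ M := setIntegral_nonneg measurableSet_Ioo hgnn
  set K := 2*M + Real.sqrt (-Real.log (1/200)) + 1 with hK
  have hKpos : 0 < K := by
    have := Real.sqrt_nonneg (-Real.log (1/200))
    rw [hK]; linarith
  set t := min (1/400 : ℝ) (Real.exp (-(K^2+1))) with ht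
  have ht0 : 0 < t := lt_min (by norm_num) (Real.exp_pos _)
  have htlt : t ≤ 1/400 := min_le_left _ _
  have hlogt : K^2 + 1 ≤ -Real.log t := by
    have h1 : Real.log t ≤ Real.log (Real.exp (-(K^2+1))) :=
      Real.log_le_log ht0 (min_le_right _ _)
    rw [Real.log_exp] at h1; linarith
  have hderiv : ∀ y ∈ Set.uIcc t (1/200 : ℝ),
      HasDerivAt (fun z => -(1/2) * Real.sqrt (-Real.log z)) (g y) y := by
    intro y hy
    rw [Set.uIcc_of_le (by linarith : t ≤ (1/200:ℝ))] at hy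
    have hy0 : 0 < y := lt_of_lt_of_le ht0 hy.1
    have hy1 : y < 1 := lt_of_le_of_lt hy.2 (by norm_num)
    have hly : Real.log y < 0 := Real.log_neg hy0 hy1
    have h1 : HasDerivAt (fun z : ℝ => -Real.log z) (-(y⁻¹)) y := (Real.hasDerivAt_log hy0.ne').neg
    have h2 : HasDerivAt Real.sqrt (1/(2*Real.sqrt (-Real.log y))) (-Real.log y) :=
      Real.hasDerivAt_sqrt (by linarith)
    have h4 := (HasDerivAt.comp y h2 h1).const_mul (-(1/2) : ℝ)
    have hsq : Real.sqrt (-Real.log y) ≠ 0 := ne_of_gt (Real.sqrt_pos.2 (by linarith))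
    refine h4.congr_deriv ?_
    rw [hg]
    field_simp
    ring
  have hii : IntervalIntegrable g volume t (1/200) := by
    rw [intervalIntegrable_iff]
    apply hint.mono_set
    rw [Set.uIoc_of_le (by linarith : t ≤ (1/200:ℝ))]
    intro y hy
    exact ⟨lt_trans ht0 hy.1, lt_of_le_of_lt hy.2 (by norm_num)⟩
  have hftc := intervalIntegral.integral_eq_sub_of_hasDerivAt hderiv hii
  have hsqt : K ≤ Real.sqrt (-Real.log t) :=
    (Real.le_sqrt hKpos.le (by nlinarith)).2 (by nlinarith)
  have hle : ∫ y in t..(1/200:ℝ), g y ≤ M := by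
    rw [intervalIntegral.integral_of_le (by linarith : t ≤ (1/200:ℝ))]
    apply setIntegral_mono_set hint hgnn'
    apply HasSubset.Subset.eventuallyLE
    intro y hy
    exact ⟨lt_trans ht0 hy.1, lt_of_le_of_lt hy.2 (by norm_num)⟩
  rw [hftc] at hle
  clear_value g M K t
  linarith [hsqt, hle]

lemma h8_meas : Measurable h8 := by
  unfold h8
  have he : Measurable (fun x : ℝ => Real.exp x) := Real.continuous_exp.measurable
  have he2 : Measurable (fun x : ℝ => Real.exp (2*x)) := he.comp (measurable_const.mul measurable_id)
  apply Measurable.div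
  · exact (measurable_const.mul he).mul (he2.add measurable_const)
  · apply Measurable.mul
    · exact (he.sub measurable_const).mul (he.add measurable_const)
    · apply Measurable.sub
      · exact (((measurable_const.mul he).add he2).sub measurable_const).mul
          (Real.measurable_log.comp ((he.sub measurable_const).div (he.add measurable_const)))
      · exact (measurable_const.mul he).mul measurable_id

lemma h8_sqrt_lb {x : ℝ} (hx0 : 0 < x) (hx : x < 1/100) :
    1/(4*x*Real.sqrt (-Real.log x)) ≤ Real.sqrt (h8 x) := by
  have hlow := (h8_bounds hx0 hx).1
  have hlg : 0 < -Real.log x := by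
    have := Real.log_neg hx0 (by linarith : x < 1)
    linarith
  have hm : 0 < x^2 * (-Real.log x) := mul_pos (by positivity) hlg
  have hQ : -h8 x * x ^ 2 * Real.log x = h8 x * (x^2 * (-Real.log x)) := by ring
  rw [hQ] at hlow
  have h116 : (1:ℝ)/16 ≤ h8 x * (x^2 * (-Real.log x)) := by linarith
  have h8pos : 0 < h8 x := by nlinarith
  have hsnn : 0 ≤ 4*x*Real.sqrt (-Real.log x) := by positivity
  have hgnn : 0 ≤ 1/(4*x*Real.sqrt (-Real.log x)) := by positivity
  rw [Real.le_sqrt hgnn h8pos.le]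
  have hss : Real.sqrt (-Real.log x) ^ 2 = -Real.log x := Real.sq_sqrt hlg.le
  have hsq : (1/(4*x*Real.sqrt (-Real.log x)))^2 = 1/(16*(x^2*(-Real.log x))) := by
    rw [div_pow, one_pow, mul_pow, mul_pow, hss]; ring
  rw [hsq, div_le_iff₀ (by positivity : (0:ℝ) < 16*(x^2*(-Real.log x)))]
  nlinarith


theorem figure8_WP_complete_at_zero :
    ∃ c c' δ : ℝ, 0 < c ∧ 0 < c' ∧ 0 < δ ∧ δ < 1 ∧
      (∀ x, 0 < x → x < δ →
        c ≤ -h8 x * x ^ 2 * Real.log x ∧ -h8 x * x ^ 2 * Real.log x ≤ c') ∧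
      ∫⁻ x in Set.Ioo 0 δ, ENNReal.ofReal (Real.sqrt (h8 x)) = ⊤ := by
  refine ⟨4/55, 7/2, 1/100, by norm_num, by norm_num, by norm_num, by norm_num,
    fun x hx0 hx => h8_bounds hx0 hx, ?_⟩
  rw [eq_top_iff, ← g_lintegral_top]
  apply setLIntegral_mono
  · exact ENNReal.measurable_ofReal.comp (Real.continuous_sqrt.measurable.comp h8_meas)
  · intro x hx
    exact ENNReal.ofReal_le_ofReal (h8_sqrt_lb hx.1 hx.2)
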